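/- arXiv:2604.23020 — 3 statements merged into one kernel-verified Lean document; each statement's English description precedes it below -/
import Mathlib

section
/- Let η^t = ∑_{n∈ℤ^d, n≠0} (2πt)^{−d/2} exp(−|Ln|²/(2t)). Then there is a constant C_d depending only on d such that 0 ≤ η^t ≤ C_d / L^d, uniformly in t > 0. -/
open Real

private lemma gauss_sum_le {c : ℝ} (hc : 0 < c) (N : ℕ) :
    ∑ k ∈ Finset.range N, Real.exp (-c * ((k : ℝ) + 1) ^ 2) ≤ Real.sqrt (π / c) / 2 := by
  have hanti : AntitoneOn (fun x : ℝ => Real.exp (-c * x ^ 2)) (Set.Icc (0:ℝ) (0 + N)) := by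
    intro x hx y hy hxy
    apply Real.exp_le_exp.2
    have h2 : x^2 ≤ y^2 := pow_le_pow_left₀ hx.1 hxy 2
    nlinarith [mul_le_mul_of_nonneg_left h2 hc.le]
  have h1 := hanti.sum_le_integral
  have h2 : ∀ k ∈ Finset.range N,
      Real.exp (-c * ((k:ℝ)+1)^2) = (fun x : ℝ => Real.exp (-c * x ^ 2)) ((0:ℝ) + ((k + 1 : ℕ):ℝ)) := by
    intro k _; push_cast; ring_nf
  rw [Finset.sum_congr rfl h2]
  refine h1.trans ?_
  rw [intervalIntegral.integral_of_le (by positivity), ← integral_gaussian_Ioi c]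
  apply MeasureTheory.setIntegral_mono_set
  · exact (integrable_exp_neg_mul_sq hc).integrableOn
  · filter_upwards with x using (Real.exp_pos _).le
  · filter_upwards with x
    intro hx
    exact hx.1

private lemma icc_sum_le {c : ℝ} (hc : 0 < c) (N : ℕ) :
    ∑ j ∈ Finset.Icc (1:ℤ) (N:ℤ), Real.exp (-c * (j:ℝ)^2) ≤ Real.sqrt (π / c) / 2 := by
  have himg : Finset.Icc (1:ℤ) (N:ℤ) = (Finset.range N).image (fun k : ℕ => (k:ℤ) + 1) := by
    ext j
    simp only [Finset.mem_Icc, Finset.mem_image, Finset.mem_range]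
    constructor
    · intro ⟨h1, h2⟩
      exact ⟨(j - 1).toNat, by omega, by omega⟩
    · rintro ⟨k, hk, rfl⟩
      omega
  rw [himg, Finset.sum_image (by intro x _ y _ h; simp only [add_left_inj, Nat.cast_inj] at h; omega)]
  have := gauss_sum_le hc N
  refine le_trans (le_of_eq ?_) this
  apply Finset.sum_congr rfl
  intro k _
  push_cast
  ring_nf

private lemma sym_sum_le {c : ℝ} (hc : 0 < c) (N : ℕ) :
    ∑ k ∈ Finset.Icc (-(N:ℤ)) (N:ℤ), Real.exp (-c * (k:ℝ)^2)
      ≤ 1 + Real.exp (-c/2) * Real.sqrt (π / (c/2)) := by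
  have hsplit : Finset.Icc (-(N:ℤ)) (N:ℤ)
      = (Finset.Icc (-(N:ℤ)) (-1) ∪ Finset.Icc (1:ℤ) (N:ℤ)) ∪ {0} := by
    ext k
    simp only [Finset.mem_Icc, Finset.mem_union, Finset.mem_singleton]
    omega
  have hdisj1 : Disjoint (Finset.Icc (-(N:ℤ)) (-1)) (Finset.Icc (1:ℤ) (N:ℤ)) := by
    rw [Finset.disjoint_left]; intro k h1 h2
    simp only [Finset.mem_Icc] at h1 h2; omega
  have hdisj2 : Disjoint (Finset.Icc (-(N:ℤ)) (-1) ∪ Finset.Icc (1:ℤ) (N:ℤ)) ({0} : Finset ℤ) := by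
    rw [Finset.disjoint_right]; intro k h1 h2
    simp only [Finset.mem_Icc, Finset.mem_union, Finset.mem_singleton] at h1 h2; omega
  have hneg : Finset.Icc (-(N:ℤ)) (-1) = (Finset.Icc (1:ℤ) (N:ℤ)).image (fun j => -j) := by
    ext k
    simp only [Finset.mem_Icc, Finset.mem_image]
    constructor
    · intro ⟨h1, h2⟩; exact ⟨-k, by omega, by omega⟩
    · rintro ⟨j, hj, rfl⟩; omega
  rw [hsplit, Finset.sum_union hdisj2, Finset.sum_union hdisj1, hneg,
    Finset.sum_image (by intro x _ y _ h; simp only [neg_inj] at h; omega)]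
  simp only [Finset.sum_singleton, Int.cast_zero, ne_eq, OfNat.ofNat_ne_zero,
    not_false_eq_true, zero_pow, mul_zero, neg_zero, Real.exp_zero]
  have heven : ∀ j ∈ Finset.Icc (1:ℤ) (N:ℤ),
      Real.exp (-c * ((-j : ℤ):ℝ)^2) = Real.exp (-c * (j:ℝ)^2) := by
    intro j _; push_cast; ring_nf
  rw [Finset.sum_congr rfl heven]
  have hkey : ∑ j ∈ Finset.Icc (1:ℤ) (N:ℤ), Real.exp (-c * (j:ℝ)^2)
      ≤ Real.exp (-c/2) * (Real.sqrt (π / (c/2)) / 2) := by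
    calc ∑ j ∈ Finset.Icc (1:ℤ) (N:ℤ), Real.exp (-c * (j:ℝ)^2)
        ≤ ∑ j ∈ Finset.Icc (1:ℤ) (N:ℤ), Real.exp (-c/2) * Real.exp (-(c/2) * (j:ℝ)^2) := by
          apply Finset.sum_le_sum
          intro j hj
          rw [← Real.exp_add]
          apply Real.exp_le_exp.2
          have hj1 : (1:ℝ) ≤ (j:ℝ) := by
            simp only [Finset.mem_Icc] at hj; exact_mod_cast hj.1
          nlinarith [sq_nonneg ((j:ℝ) - 1)]
      _ = Real.exp (-c/2) * ∑ j ∈ Finset.Icc (1:ℤ) (N:ℤ), Real.exp (-(c/2) * (j:ℝ)^2) := by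
          rw [Finset.mul_sum]
      _ ≤ Real.exp (-c/2) * (Real.sqrt (π / (c/2)) / 2) := by
          apply mul_le_mul_of_nonneg_left (icc_sum_le (half_pos hc) N) (Real.exp_pos _).le
  linarith [hkey]

private lemma key_bound (m : ℕ) {u L : ℝ} (hu : 0 < u) (hL : 1 ≤ L) :
    Real.exp (-(π * L^2 / u^2) / 2) * (1/u + Real.sqrt 2 / L) ^ m
      ≤ (1 + Real.sqrt 2)^m * (1 + (m.factorial : ℝ)) / L ^ m := by
  have hL0 : (0:ℝ) < L := lt_of_lt_of_le one_pos hL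
  have hs2 : (0:ℝ) ≤ Real.sqrt 2 := Real.sqrt_nonneg 2
  have hbase : (0:ℝ) ≤ 1/u + Real.sqrt 2 / L := by positivity
  rcases le_or_gt L u with hcase | hcase
  · -- L ≤ u : exp ≤ 1, base ≤ (1+√2)/L
    have h1 : Real.exp (-(π * L^2 / u^2) / 2) ≤ 1 := by
      apply Real.exp_le_one_iff.2
      have : 0 ≤ π * L^2 / u^2 := by positivity
      linarith
    have h2 : 1/u + Real.sqrt 2 / L ≤ (1 + Real.sqrt 2)/L := by
      have : 1/u ≤ 1/L := by
        apply one_div_le_one_div_of_le hL0 hcase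
      rw [add_div]
      linarith
    calc Real.exp (-(π * L^2 / u^2) / 2) * (1/u + Real.sqrt 2 / L) ^ m
        ≤ 1 * ((1 + Real.sqrt 2)/L) ^ m := by
          apply mul_le_mul h1 (pow_le_pow_left₀ hbase h2 m) (by positivity) one_pos.le
      _ = (1 + Real.sqrt 2)^m / L^m := by rw [one_mul, div_pow]
      _ ≤ (1 + Real.sqrt 2)^m * (1 + (m.factorial : ℝ)) / L ^ m := by
          gcongr
          have h4 : (0:ℝ) ≤ (m.factorial : ℝ) := Nat.cast_nonneg _
          nlinarith [pow_nonneg (by positivity : (0:ℝ) ≤ 1 + Real.sqrt 2) m]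
  · -- u < L
    have hxpos : (0:ℝ) < π * L^2 / u^2 / 2 := by positivity
    have hexp : Real.exp (-(π * L^2 / u^2) / 2)
        ≤ (m.factorial : ℝ) * (u^2 * 2 / (π * L^2))^m := by
      have h := Real.pow_div_factorial_le_exp (x := π * L ^ 2 / u ^ 2 / 2) hxpos.le m
      have hepos := Real.exp_pos (π * L^2 / u^2 / 2)
      have hfac : (0:ℝ) < (m.factorial : ℝ) := by exact_mod_cast m.factorial_pos
      rw [div_le_iff₀ hfac] at h
      have hfe : (π * L^2 / u^2 / 2)^m ≤ Real.exp (π * L^2 / u^2 / 2) * (m.factorial:ℝ) := h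
      have hinv : Real.exp (-(π * L^2 / u^2) / 2) = (Real.exp (π * L^2 / u^2 / 2))⁻¹ := by
        rw [← Real.exp_neg]; ring_nf
      rw [hinv]
      rw [inv_le_iff_one_le_mul₀ hepos]
      have hrw : (u^2 * 2 / (π * L^2))^m = ((π * L^2 / u^2 / 2)^m)⁻¹ := by
        rw [← inv_pow]
        congr 1
        field_simp
      rw [hrw]
      have hppos : (0:ℝ) < (π * L^2 / u^2 / 2)^m := by positivity
      calc (1:ℝ) = (π * L^2 / u^2 / 2)^m * ((π * L^2 / u^2 / 2)^m)⁻¹ := by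
            rw [mul_inv_cancel₀ hppos.ne']
        _ ≤ Real.exp (π * L^2 / u^2 / 2) * (m.factorial:ℝ) * ((π * L^2 / u^2 / 2)^m)⁻¹ := by
            apply mul_le_mul_of_nonneg_right hfe (by positivity)
        _ = (m.factorial:ℝ) * ((π * L ^ 2 / u ^ 2 / 2) ^ m)⁻¹ * Real.exp (π * L^2 / u^2 / 2) := by
            ring
    have hbase2 : 1/u + Real.sqrt 2 / L ≤ (1 + Real.sqrt 2)/u := by
      have h1u : Real.sqrt 2 / L ≤ Real.sqrt 2 / u := by
        apply div_le_div_of_nonneg_left hs2 hu hcase.le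
      rw [add_div]
      linarith
    calc Real.exp (-(π * L^2 / u^2) / 2) * (1/u + Real.sqrt 2 / L) ^ m
        ≤ ((m.factorial : ℝ) * (u^2 * 2 / (π * L^2))^m) * ((1 + Real.sqrt 2)/u) ^ m := by
          apply mul_le_mul hexp (pow_le_pow_left₀ hbase hbase2 m) (by positivity) (by positivity)
      _ = (m.factorial : ℝ) * ((u^2 * 2 / (π * L^2)) * ((1 + Real.sqrt 2)/u)) ^ m := by
          rw [mul_pow, mul_assoc]
      _ ≤ (m.factorial : ℝ) * ((1 + Real.sqrt 2)/L) ^ m := by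
          apply mul_le_mul_of_nonneg_left ?_ (Nat.cast_nonneg _)
          apply pow_le_pow_left₀ (by positivity)
          have hpi : (2:ℝ) < π := by linarith [Real.pi_gt_three]
          rw [div_mul_div_comm, div_le_div_iff₀ (by positivity) hL0]
          have h5 : u^2 * L ≤ L^2 * u := by nlinarith [mul_le_mul_of_nonneg_left hcase.le (mul_nonneg hu.le hL0.le)]
          calc u ^ 2 * 2 * (1 + Real.sqrt 2) * L = 2*(1+Real.sqrt 2)*(u^2*L) := by ring
            _ ≤ 2*(1+Real.sqrt 2)*(L^2*u) := by
                apply mul_le_mul_of_nonneg_left h5 (by positivity)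
            _ ≤ π*(1+Real.sqrt 2)*(L^2*u) := by
                apply mul_le_mul_of_nonneg_right ?_ (by positivity)
                apply mul_le_mul_of_nonneg_right hpi.le (by positivity)
            _ = (1 + Real.sqrt 2) * (π * L ^ 2 * u) := by ring
      _ = (m.factorial : ℝ) * (1 + Real.sqrt 2)^m / L^m := by
          rw [div_pow]; ring
      _ ≤ (1 + Real.sqrt 2)^m * (1 + (m.factorial : ℝ)) / L ^ m := by
          gcongr ?_ / _
          nlinarith [pow_nonneg (by positivity : (0:ℝ) ≤ 1 + Real.sqrt 2) m,
            Nat.cast_nonneg (α := ℝ) m.factorial]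


/-- The lattice point `L·k ∈ ℝ^d` associated to `k ∈ ℤ^d`. -/
noncomputable def latVec (d : ℕ) (L : ℝ) (k : Fin d → ℤ) : EuclideanSpace ℝ (Fin d) :=
  WithLp.toLp 2 (fun i => L * (k i : ℝ))

/-- `η^t = ∑_{n∈ℤ^d, n≠0} (2πt)^{−d/2} exp(−|Ln|²/(2t))`, the periodic heat kernel
at `0` minus the Euclidean heat kernel at `0`. -/
noncomputable def etaKer (d : ℕ) (L t : ℝ) : ℝ :=
  ∑' n : {n : Fin d → ℤ // n ≠ 0},
    (2 * π * t) ^ (-(d : ℝ) / 2) * Real.exp (-‖latVec d L (n : Fin d → ℤ)‖ ^ 2 / (2 * t))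

/-- There is a constant `C_d` depending only on `d` such that `0 ≤ η^t ≤ C_d / L^d`,
uniformly in `t > 0` and `L ≥ 1`. -/
theorem etaKer_le (d : ℕ) (hd : 1 ≤ d) :
    ∃ C : ℝ, 0 < C ∧ ∀ L : ℝ, 1 ≤ L → ∀ t : ℝ, 0 < t →
      0 ≤ etaKer d L t ∧ etaKer d L t ≤ C / L ^ d := by
  set K : ℝ := (1 + Real.sqrt 2)^(d-1) * (1 + ((d-1).factorial : ℝ)) with hK
  have hKpos : 0 < K := by positivity
  refine ⟨(d:ℝ) * Real.sqrt 2 * K, by positivity, ?_⟩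
  intro L hL t ht
  have hL0 : (0:ℝ) < L := lt_of_lt_of_le one_pos hL
  have h2pt : (0:ℝ) < 2 * π * t := by positivity
  have hnn : ∀ n : {n : Fin d → ℤ // n ≠ 0},
      0 ≤ (2 * π * t) ^ (-(d : ℝ) / 2)
        * Real.exp (-‖latVec d L (n : Fin d → ℤ)‖ ^ 2 / (2 * t)) := fun n =>
    mul_nonneg (Real.rpow_nonneg h2pt.le _) (Real.exp_pos _).le
  refine ⟨tsum_nonneg hnn, ?_⟩
  set u := Real.sqrt (2 * π * t) with hu
  have hupos : 0 < u := Real.sqrt_pos.2 h2pt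
  have hu2 : u ^ 2 = 2 * π * t := Real.sq_sqrt h2pt.le
  set b := L ^ 2 / (2 * t) with hb
  have hbpos : 0 < b := by positivity
  have hbe : b = π * L ^ 2 / u ^ 2 := by
    rw [hb, hu2]; field_simp
  have hpref : (2 * π * t) ^ (-(d : ℝ) / 2) = (u ^ d)⁻¹ := by
    rw [← hu2, ← Real.rpow_natCast u 2, ← Real.rpow_mul hupos.le,
      ← Real.rpow_natCast u d, ← Real.rpow_neg hupos.le]
    congr 1
    push_cast
    ring
  apply tsum_le_of_sum_le' (by positivity)
  intro s
  set N : ℕ := s.sup (fun n => Finset.univ.sup (fun i => ((n : Fin d → ℤ) i).natAbs)) with hN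
  have hbound : ∀ n ∈ s, ∀ i : Fin d, -(N:ℤ) ≤ (n : Fin d → ℤ) i ∧ ((n : Fin d → ℤ) i) ≤ N := by
    intro n hn i
    have h2 : (Finset.univ.sup fun i => ((n : Fin d → ℤ) i).natAbs) ≤ N :=
      Finset.le_sup (f := fun n : {n : Fin d → ℤ // n ≠ 0} =>
        Finset.univ.sup fun i => ((n : Fin d → ℤ) i).natAbs) hn
    have h1 : ((n : Fin d → ℤ) i).natAbs ≤ Finset.univ.sup fun i => ((n : Fin d → ℤ) i).natAbs :=
      Finset.le_sup (f := fun i : Fin d => ((n : Fin d → ℤ) i).natAbs) (Finset.mem_univ i)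
    omega
  have hterm : ∀ k : Fin d → ℤ,
      Real.exp (-‖latVec d L k‖ ^ 2 / (2 * t)) = ∏ i, Real.exp (-(b * ((k i : ℝ))^2)) := by
    intro k
    rw [← Real.exp_sum]
    congr 1
    have hnorm : ‖latVec d L k‖ ^ 2 = ∑ i, (L * ((k i : ℝ)))^2 := by
      rw [EuclideanSpace.norm_eq, Real.sq_sqrt (by positivity)]
      apply Finset.sum_congr rfl
      intro i _
      rw [Real.norm_eq_abs, sq_abs]
      rfl
    rw [hnorm, neg_div, Finset.sum_div]
    rw [show (∑ i, -(b * ((k i:ℝ))^2)) = -∑ i : Fin d, b * ((k i:ℝ))^2 by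
      rw [Finset.sum_neg_distrib]]
    congr 1
    apply Finset.sum_congr rfl
    intro i _
    rw [hb]
    field_simp
  set g : (Fin d → ℤ) → ℝ := fun k => ∏ i, Real.exp (-(b * ((k i : ℝ))^2)) with hg
  have hg0 : ∀ k, 0 ≤ g k := fun k => Finset.prod_nonneg fun i _ => (Real.exp_pos _).le
  set box := Fintype.piFinset (fun _ : Fin d => Finset.Icc (-(N:ℤ)) (N:ℤ)) with hbox
  have h0box : (0 : Fin d → ℤ) ∈ box := by
    rw [hbox, Fintype.mem_piFinset]
    intro i
    simp only [Pi.zero_apply, Finset.mem_Icc]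
    omega
  have hsub : s.image Subtype.val ⊆ box.erase 0 := by
    intro m hm
    rw [Finset.mem_image] at hm
    obtain ⟨n, hn, rfl⟩ := hm
    rw [Finset.mem_erase]
    refine ⟨n.2, ?_⟩
    rw [hbox, Fintype.mem_piFinset]
    intro i
    rw [Finset.mem_Icc]
    exact hbound n hn i
  set F0 := ∑ k ∈ Finset.Icc (-(N:ℤ)) (N:ℤ), Real.exp (-(b * (k:ℝ)^2)) with hF0
  have hF0nn : 0 ≤ F0 := Finset.sum_nonneg fun k _ => (Real.exp_pos _).le
  set G := Real.sqrt (π / (b/2)) with hG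
  have hGnn : 0 ≤ G := Real.sqrt_nonneg _
  have hF0le : F0 ≤ 1 + Real.exp (-b/2) * G := by
    have h := sym_sum_le hbpos N
    simp only [neg_mul] at h
    exact h
  have hGeq : G = Real.sqrt 2 * u / L := by
    rw [hG]
    have h2 : π / (b/2) = (Real.sqrt 2 * u / L)^2 := by
      rw [div_pow, mul_pow, Real.sq_sqrt (by norm_num : (0:ℝ) ≤ 2), hu2, hb]
      field_simp
    rw [h2, Real.sqrt_sq (by positivity)]
  have hε : Real.exp (-b/2) ≤ 1 := Real.exp_le_one_iff.2 (by linarith)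
  have hεnn : 0 ≤ Real.exp (-b/2) := (Real.exp_pos _).le
  have hgeom : F0 ^ d - 1 ≤ (d:ℝ) * (Real.exp (-b/2) * G) * (1+G)^(d-1) := by
    set x := 1 + Real.exp (-b/2) * G with hx
    have hx1 : (1:ℝ) ≤ x := by
      rw [hx]; nlinarith
    have hxle : x ≤ 1 + G := by rw [hx]; nlinarith
    have hFle : F0 ^ d ≤ x ^ d := pow_le_pow_left₀ hF0nn hF0le d
    have hsum : ∑ i ∈ Finset.range d, x ^ i ≤ (d:ℝ) * (1+G)^(d-1) := by
      calc ∑ i ∈ Finset.range d, x ^ i ≤ ∑ _i ∈ Finset.range d, (1+G)^(d-1) := by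
            apply Finset.sum_le_sum
            intro i hi
            calc x ^ i ≤ (1+G) ^ i := pow_le_pow_left₀ (by linarith) hxle i
              _ ≤ (1+G)^(d-1) := by
                  apply pow_le_pow_right₀ (by linarith)
                  rw [Finset.mem_range] at hi
                  omega
        _ = (d:ℝ) * (1+G)^(d-1) := by
            rw [Finset.sum_const, Finset.card_range, nsmul_eq_mul]
    calc F0 ^ d - 1 ≤ x ^ d - 1 := by linarith
      _ = (∑ i ∈ Finset.range d, x ^ i) * (x - 1) := (geom_sum_mul x d).symm
      _ ≤ ((d:ℝ) * (1+G)^(d-1)) * (x - 1) := by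
          apply mul_le_mul_of_nonneg_right hsum
          linarith
      _ = (d:ℝ) * (Real.exp (-b/2) * G) * (1+G)^(d-1) := by
          rw [hx]; ring
  have hchain : ∑ n ∈ s, (2 * π * t) ^ (-(d : ℝ) / 2)
      * Real.exp (-‖latVec d L (n : Fin d → ℤ)‖ ^ 2 / (2 * t))
      ≤ (u ^ d)⁻¹ * ((d:ℝ) * (Real.exp (-b/2) * G) * (1+G)^(d-1)) := by
    calc ∑ n ∈ s, (2 * π * t) ^ (-(d : ℝ) / 2)
          * Real.exp (-‖latVec d L (n : Fin d → ℤ)‖ ^ 2 / (2 * t))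
        = (u ^ d)⁻¹ * ∑ n ∈ s, g (n : Fin d → ℤ) := by
          simp only [hpref]
          rw [← Finset.mul_sum]
          congr 1
          refine Finset.sum_congr rfl fun n _ => ?_
          exact hterm _
      _ ≤ (u ^ d)⁻¹ * (F0 ^ d - 1) := by
          apply mul_le_mul_of_nonneg_left ?_ (by positivity)
          calc ∑ n ∈ s, g (n : Fin d → ℤ)
              = ∑ m ∈ s.image Subtype.val, g m := by
                rw [Finset.sum_image (fun x _ y _ h => Subtype.ext h)]
            _ ≤ ∑ m ∈ box.erase 0, g m :=
                Finset.sum_le_sum_of_subset_of_nonneg hsub (fun m _ _ => hg0 m)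
            _ = (∑ m ∈ box, g m) - g 0 := Finset.sum_erase_eq_sub h0box
            _ = F0 ^ d - 1 := by
                congr 1
                · rw [hbox]
                  simp only [hg]
                  rw [← Finset.prod_univ_sum (fun _ : Fin d => Finset.Icc (-(N:ℤ)) (N:ℤ))
                    (fun _ j => Real.exp (-(b * (j:ℝ)^2)))]
                  rw [Finset.prod_const, Finset.card_univ, Fintype.card_fin]
                · rw [hg]
                  simp
      _ ≤ (u ^ d)⁻¹ * ((d:ℝ) * (Real.exp (-b/2) * G) * (1+G)^(d-1)) := by
          apply mul_le_mul_of_nonneg_left hgeom (by positivity)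
  have halg : (u ^ d)⁻¹ * ((d:ℝ) * (Real.exp (-b/2) * G) * (1+G)^(d-1))
      = (d:ℝ) * (Real.sqrt 2 / L)
        * (Real.exp (-b/2) * (1/u + Real.sqrt 2 / L)^(d-1)) := by
    have h1G : (1 + G)^(d-1) = u^(d-1) * (1/u + Real.sqrt 2 / L)^(d-1) := by
      rw [← mul_pow]
      congr 1
      rw [hGeq]
      field_simp
    have hupow : u ^ d = u * u^(d-1) := by
      conv_lhs => rw [show d = (d-1)+1 by omega]
      rw [pow_succ]
      ring
    rw [h1G, hGeq, hupow]
    field_simp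
  have hkb := key_bound (d-1) hupos hL
  rw [← hbe] at hkb
  rw [← hK] at hkb
  calc ∑ n ∈ s, (2 * π * t) ^ (-(d : ℝ) / 2)
        * Real.exp (-‖latVec d L (n : Fin d → ℤ)‖ ^ 2 / (2 * t))
      ≤ (d:ℝ) * (Real.sqrt 2 / L)
        * (Real.exp (-b/2) * (1/u + Real.sqrt 2 / L)^(d-1)) := by
        rw [← halg]; exact hchain
    _ ≤ (d:ℝ) * (Real.sqrt 2 / L) * (K / L^(d-1)) := by
        apply mul_le_mul_of_nonneg_left ?_ (by positivity)
        exact hkb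
    _ = (d:ℝ) * Real.sqrt 2 * K / L ^ d := by
        have hLpow : L ^ d = L * L^(d-1) := by
          conv_lhs => rw [show d = (d-1)+1 by omega]
          rw [pow_succ]
          ring
        rw [hLpow]
        field_simp
end

section
/- Prüfer's theorem: For n ≥ 2 and positive integers δ₁,…,δₙ with ∑_{i=1}^n δ_i = 2(n−1), the number of labeled trees on {1,…,n} in which vertex i has degree δ_i equals (n−2)! / ∏_{i=1}^n (δ_i − 1)!. -/
open SimpleGraph Finset

lemma aux_adj_of_connected {V : Type*} {G : SimpleGraph V} (hG : G.Connected) {v w : V}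
    (hvw : v ≠ w) : ∃ x, G.Adj v x := by
  obtain ⟨p⟩ := hG v w
  cases p with
  | nil => exact absurd rfl hvw
  | cons h _ => exact ⟨_, h⟩

lemma aux_no_cycle_at {V : Type*} {G : SimpleGraph V} {i j : V}
    (hnb : ∀ y, G.Adj i y → y = j) (d : G.Walk i i) : ¬ d.IsCycle := by
  intro hd
  cases d with
  | nil => exact hd.ne_nil rfl
  | @cons _ y _ h p =>
    have hy : y = j := hnb _ h
    obtain ⟨w, hw, q, hq⟩ := SimpleGraph.Walk.exists_eq_cons_of_ne h.ne p.reverse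
    have hwj : w = j := hnb _ hw
    have hmem : s(i, y) ∈ p.edges := by
      have h1 : s(i, w) ∈ p.reverse.edges := by rw [hq]; simp
      rw [SimpleGraph.Walk.edges_reverse, List.mem_reverse] at h1
      have hwy : w = y := hwj.trans hy.symm
      rwa [hwy] at h1
    rw [SimpleGraph.Walk.cons_isCycle_iff] at hd
    exact hd.2 hmem

lemma aux_cycle_avoid {V : Type*} {G : SimpleGraph V} {i j : V}
    (hnb : ∀ y, G.Adj i y → y = j) {v : V} {c : G.Walk v v} (hc : c.IsCycle) :
    i ∉ c.support := by
  classical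
  exact fun hi => aux_no_cycle_at hnb (c.rotate i hi) (hc.rotate hi)

lemma aux_nat_card_sigma {ι : Type*} [Fintype ι] (f : ι → Type*) [∀ i, Finite (f i)] :
    Nat.card (Σ i, f i) = ∑ i, Nat.card (f i) := by
  have := fun i => Fintype.ofFinite (f i)
  simp [Nat.card_eq_fintype_card, Fintype.card_sigma]

section Del
variable {n : ℕ} {i₀ : Fin (n+1)} {G : SimpleGraph (Fin (n+1))} {j : Fin (n+1)}

lemma aux_reach (hnb : ∀ y, G.Adj i₀ y → y = j) :
    ∀ (N : ℕ) (u v : Fin (n+1)) (p : G.Walk u v), p.length ≤ N →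
      ∀ (a b : Fin n), i₀.succAbove a = u → i₀.succAbove b = v →
      (G.comap i₀.succAbove).Reachable a b := by
  intro N
  induction N with
  | zero =>
    intro u v p hp a b ha hb
    have h0 : p.length = 0 := Nat.le_zero.mp hp
    have huv := SimpleGraph.Walk.eq_of_length_eq_zero h0
    have hab : a = b := Fin.succAbove_right_injective (by rw [ha, hb, huv])
    subst hab
    exact Reachable.refl _
  | succ N ih =>
    intro u v p hp a b ha hb
    cases p with
    | nil =>
      have hab : a = b := Fin.succAbove_right_injective (by rw [ha, hb])
      subst hab
      exact Reachable.refl _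
    | @cons _ x _ h q =>
      subst ha hb
      by_cases hx : x = i₀
      · rw [eq_comm] at hx
        subst hx
        have hfa : i₀.succAbove a = j := hnb _ h.symm
        obtain ⟨y, hy, r, rfl⟩ :=
          SimpleGraph.Walk.exists_eq_cons_of_ne (Fin.ne_succAbove i₀ b) q
        have hya : y = i₀.succAbove a := (hnb _ hy).trans hfa.symm
        subst hya
        refine ih _ _ r ?_ a b rfl rfl
        simp only [SimpleGraph.Walk.length_cons] at hp
        omega
      · obtain ⟨c, rfl⟩ := Fin.exists_succAbove_eq hx
        refine Reachable.trans (SimpleGraph.Adj.reachable (by exact h)) (ih _ _ q ?_ c b rfl rfl)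
        simp only [SimpleGraph.Walk.length_cons] at hp
        omega

lemma comap_connected (hG : G.Connected) (hnb : ∀ y, G.Adj i₀ y → y = j) [NeZero n] :
    (G.comap i₀.succAbove).Connected := by
  constructor
  · intro a b
    obtain ⟨p⟩ := hG (i₀.succAbove a) (i₀.succAbove b)
    exact aux_reach hnb p.length _ _ p le_rfl a b rfl rfl

lemma comap_acyclic (hG : G.IsAcyclic) : (G.comap i₀.succAbove).IsAcyclic := by
  intro v c hc
  let hom : G.comap i₀.succAbove →g G := ⟨i₀.succAbove, fun {a b} h => h⟩
  have : (c.map hom).IsCycle := by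
    refine (SimpleGraph.Walk.map_isCycle_iff_of_injective ?_).2 hc
    intro a b hab
    have hab' : i₀.succAbove a = i₀.succAbove b := hab
    exact Fin.succAbove_right_injective (p := i₀) hab'
  exact hG _ this

lemma comap_ncard (m : Fin n) (hj : G.neighborSet i₀ = {j}) :
    ((G.comap i₀.succAbove).neighborSet m).ncard
      = (G.neighborSet (i₀.succAbove m)).ncard
        - (if i₀.succAbove m = j then 1 else 0) := by
  have hpre : (G.comap i₀.succAbove).neighborSet m
      = i₀.succAbove ⁻¹' (G.neighborSet (i₀.succAbove m)) := rfl
  have himg : i₀.succAbove '' ((G.comap i₀.succAbove).neighborSet m)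
      = G.neighborSet (i₀.succAbove m) \ {i₀} := by
    rw [hpre, Set.image_preimage_eq_inter_range, Fin.range_succAbove]
    exact (Set.diff_eq _ _).symm
  have hcard := Set.ncard_image_of_injective ((G.comap i₀.succAbove).neighborSet m)
    (Fin.succAbove_right_injective (p := i₀))
  rw [← hcard, himg]
  by_cases hm : i₀.succAbove m = j
  · rw [if_pos hm]
    have hmem : i₀ ∈ G.neighborSet (i₀.succAbove m) := by
      have h1 : j ∈ G.neighborSet i₀ := by rw [hj]; rfl
      have : G.Adj (i₀.succAbove m) i₀ := by rw [hm]; exact h1.symm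
      exact this
    exact Set.ncard_diff_singleton_of_mem hmem
  · rw [if_neg hm, Nat.sub_zero]
    have hni : i₀ ∉ G.neighborSet (i₀.succAbove m) := by
      intro hmem
      have : i₀.succAbove m ∈ G.neighborSet i₀ := SimpleGraph.Adj.symm hmem
      rw [hj, Set.mem_singleton_iff] at this
      exact hm this
    rw [Set.diff_singleton_eq_self hni]

end Del

section Add
variable {n : ℕ} (i₀ : Fin (n+1)) (k : Fin n) (H : SimpleGraph (Fin n))

/-- Attach a new leaf `i₀` to the vertex (image of) `k` of `H`. -/
def addLeaf : SimpleGraph (Fin (n+1)) :=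
  H.map i₀.succAboveEmb ⊔ SimpleGraph.fromEdgeSet {s(i₀, i₀.succAbove k)}

variable {i₀ k H}

lemma addLeaf_adj {u v : Fin (n+1)} :
    (addLeaf i₀ k H).Adj u v ↔
      (∃ a b, H.Adj a b ∧ i₀.succAbove a = u ∧ i₀.succAbove b = v)
        ∨ (u = i₀ ∧ v = i₀.succAbove k) ∨ (u = i₀.succAbove k ∧ v = i₀) := by
  have hne : i₀ ≠ i₀.succAbove k := Fin.ne_succAbove i₀ k
  simp only [addLeaf, sup_adj, SimpleGraph.map_adj, Fin.succAboveEmb_apply,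
    SimpleGraph.fromEdgeSet_adj, Set.mem_singleton_iff, Sym2.eq, Sym2.rel_iff', Prod.mk.injEq,
    Prod.swap_prod_mk]
  constructor
  · rintro (h | ⟨(⟨h1, h2⟩ | ⟨h1, h2⟩), _⟩)
    · exact Or.inl h
    · exact Or.inr (Or.inl ⟨h1, h2⟩)
    · exact Or.inr (Or.inr ⟨h1, h2⟩)
  · rintro (h | ⟨h1, h2⟩ | ⟨h1, h2⟩)
    · exact Or.inl h
    · refine Or.inr ⟨Or.inl ⟨h1, h2⟩, ?_⟩
      rw [h1, h2]; exact hne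
    · refine Or.inr ⟨Or.inr ⟨h1, h2⟩, ?_⟩
      rw [h1, h2]; exact hne.symm

lemma addLeaf_adj_left {y : Fin (n+1)} :
    (addLeaf i₀ k H).Adj i₀ y ↔ y = i₀.succAbove k := by
  rw [addLeaf_adj]
  constructor
  · rintro (⟨a, b, _, ha, _⟩ | ⟨_, h2⟩ | ⟨h1, _⟩)
    · exact absurd ha (Fin.succAbove_ne i₀ a)
    · exact h2
    · exact absurd h1.symm (Fin.succAbove_ne i₀ k)
  · rintro rfl
    exact Or.inr (Or.inl ⟨rfl, rfl⟩)

lemma addLeaf_adj_emb {a b : Fin n} :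
    (addLeaf i₀ k H).Adj (i₀.succAbove a) (i₀.succAbove b) ↔ H.Adj a b := by
  rw [addLeaf_adj]
  constructor
  · rintro (⟨a', b', hab, ha, hb⟩ | ⟨h1, _⟩ | ⟨_, h2⟩)
    · rwa [Fin.succAbove_right_injective ha, Fin.succAbove_right_injective hb] at hab
    · exact absurd h1 (Fin.succAbove_ne i₀ a)
    · exact absurd h2 (Fin.succAbove_ne i₀ b)
  · intro h
    exact Or.inl ⟨a, b, h, rfl, rfl⟩

lemma comap_addLeaf : (addLeaf i₀ k H).comap i₀.succAbove = H := by
  ext a b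
  exact addLeaf_adj_emb

lemma addLeaf_nbhd_left : (addLeaf i₀ k H).neighborSet i₀ = {i₀.succAbove k} := by
  ext y; simp [SimpleGraph.mem_neighborSet, addLeaf_adj_left]

lemma addLeaf_nbhd_emb (m : Fin n) :
    (addLeaf i₀ k H).neighborSet (i₀.succAbove m)
      = i₀.succAbove '' H.neighborSet m ∪ (if m = k then {i₀} else ∅) := by
  ext y
  by_cases hy : i₀ = y
  · subst hy
    simp only [SimpleGraph.mem_neighborSet, Set.mem_union, Set.mem_image]
    constructor
    · intro h
      have : i₀.succAbove m = i₀.succAbove k := (addLeaf_adj_left.1 h.symm)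
      have hmk : m = k := Fin.succAbove_right_injective this
      simp [hmk]
    · rintro (⟨a, _, ha⟩ | hmem)
      · exact absurd ha (Fin.succAbove_ne i₀ a)
      · by_cases hmk : m = k
        · subst hmk
          exact ((addLeaf_adj_left (H := H)).2 rfl).symm
        · simp [hmk] at hmem
  · obtain ⟨c, rfl⟩ := Fin.exists_succAbove_eq (Ne.symm hy)
    simp only [SimpleGraph.mem_neighborSet, Set.mem_union, Set.mem_image]
    rw [addLeaf_adj_emb]
    constructor
    · intro h
      exact Or.inl ⟨c, h, rfl⟩
    · rintro (⟨a, ha, hac⟩ | hmem)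
      · rwa [← Fin.succAbove_right_injective hac]
      · exfalso
        by_cases hmk : m = k <;> simp [hmk] at hmem

lemma addLeaf_ncard_left : ((addLeaf i₀ k H).neighborSet i₀).ncard = 1 := by
  rw [addLeaf_nbhd_left, Set.ncard_singleton]

lemma addLeaf_ncard_emb (m : Fin n) :
    ((addLeaf i₀ k H).neighborSet (i₀.succAbove m)).ncard
      = (H.neighborSet m).ncard + (if m = k then 1 else 0) := by
  rw [addLeaf_nbhd_emb m]
  by_cases hmk : m = k
  · simp only [hmk, if_pos]
    rw [Set.union_singleton, Set.ncard_insert_of_notMem (by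
      rintro ⟨a, _, ha⟩
      exact (Fin.succAbove_ne i₀ a) ha)]
    rw [Set.ncard_image_of_injective _ (Fin.succAbove_right_injective (p := i₀))]
  · simp only [hmk, if_neg, if_false, Set.union_empty, Nat.add_zero]
    rw [Set.ncard_image_of_injective _ (Fin.succAbove_right_injective (p := i₀))]

lemma addLeaf_connected [NeZero n] (hH : H.Connected) : (addLeaf i₀ k H).Connected := by
  have key : ∀ v : Fin (n+1), (addLeaf i₀ k H).Reachable v (i₀.succAbove k) := by
    intro v
    by_cases hv : v = i₀
    · subst hv
      exact (SimpleGraph.Adj.reachable (addLeaf_adj_left.2 rfl))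
    · obtain ⟨c, rfl⟩ := Fin.exists_succAbove_eq hv
      exact Reachable.map ⟨i₀.succAbove, fun {a b} h => addLeaf_adj_emb.2 h⟩ (hH c k)
  constructor
  intro u v
  exact (key u).trans (key v).symm

lemma addLeaf_lift {u v : Fin (n+1)} (p : (addLeaf i₀ k H).Walk u v) :
    i₀ ∉ p.support → ∀ (a b : Fin n) (ha : i₀.succAbove a = u) (hb : i₀.succAbove b = v),
    ∃ q : H.Walk a b,
      q.map ⟨i₀.succAbove, fun {a b} h => addLeaf_adj_emb.2 h⟩ = p.copy ha.symm hb.symm := by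
  induction p with
  | nil =>
    intro _ a b ha hb
    subst ha
    have hab : b = a := Fin.succAbove_right_injective hb
    subst hab
    exact ⟨SimpleGraph.Walk.nil, by simp⟩
  | @cons u x v h p ih =>
    intro hsup a b ha hb
    subst ha hb
    rw [SimpleGraph.Walk.support_cons] at hsup
    have hsup' : i₀ ∉ p.support := fun hh => hsup (List.mem_cons_of_mem _ hh)
    have hx : x ≠ i₀ := fun hxx => hsup' (hxx ▸ p.start_mem_support)
    obtain ⟨c, hc⟩ := Fin.exists_succAbove_eq hx
    subst hc
    have hHadj : H.Adj a c := addLeaf_adj_emb.1 h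
    obtain ⟨q, hq⟩ := ih hsup' c b rfl rfl
    refine ⟨SimpleGraph.Walk.cons hHadj q, ?_⟩
    rw [SimpleGraph.Walk.map_cons, SimpleGraph.Walk.copy_rfl_rfl] at *
    rw [hq]

lemma addLeaf_acyclic (hH : H.IsAcyclic) : (addLeaf i₀ k H).IsAcyclic := by
  intro v c hc
  have hnb : ∀ y, (addLeaf i₀ k H).Adj i₀ y → y = i₀.succAbove k := fun y h =>
    addLeaf_adj_left.1 h
  have hi₀ : i₀ ∉ c.support := aux_cycle_avoid hnb hc
  have hv : v ≠ i₀ := fun h => hi₀ (h ▸ c.start_mem_support)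
  obtain ⟨a, ha⟩ := Fin.exists_succAbove_eq hv
  subst ha
  obtain ⟨q, hq⟩ := addLeaf_lift c hi₀ a a rfl rfl
  rw [SimpleGraph.Walk.copy_rfl_rfl] at hq
  have hinj : Function.Injective
      (⟨i₀.succAbove, fun {a b} h => addLeaf_adj_emb.2 h⟩ : H →g addLeaf i₀ k H) := by
    intro a b hab
    have hab' : i₀.succAbove a = i₀.succAbove b := hab
    exact Fin.succAbove_right_injective (p := i₀) hab'
  have hqc : q.IsCycle := by
    rw [← SimpleGraph.Walk.map_isCycle_iff_of_injective hinj, hq]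
    exact hc
  exact hH _ hqc


lemma addLeaf_comap_eq {G : SimpleGraph (Fin (n+1))} {k : Fin n}
    (hnb : ∀ y, G.Adj i₀ y → y = i₀.succAbove k) (hadj : G.Adj i₀ (i₀.succAbove k)) :
    addLeaf i₀ k (G.comap i₀.succAbove) = G := by
  ext u v
  rw [addLeaf_adj]
  constructor
  · rintro (⟨a, b, hab, rfl, rfl⟩ | ⟨rfl, rfl⟩ | ⟨rfl, rfl⟩)
    · exact hab
    · exact hadj
    · exact hadj.symm
  · intro h
    by_cases hu : i₀ = u
    · subst hu
      exact Or.inr (Or.inl ⟨rfl, hnb v h⟩)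
    · by_cases hv : i₀ = v
      · subst hv
        exact Or.inr (Or.inr ⟨hnb u h.symm, rfl⟩)
      · obtain ⟨a, rfl⟩ := Fin.exists_succAbove_eq (Ne.symm hu)
        obtain ⟨b, rfl⟩ := Fin.exists_succAbove_eq (Ne.symm hv)
        exact Or.inl ⟨a, b, h, rfl, rfl⟩

lemma card_eq (hn : 2 ≤ n) (i₀ : Fin (n+1)) (δ : Fin (n+1) → ℕ) (hδ : ∀ i, 1 ≤ δ i)
    (hi₀ : δ i₀ = 1) :
    Nat.card {G : SimpleGraph (Fin (n+1)) // G.IsTree ∧ ∀ i, (G.neighborSet i).ncard = δ i}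
      = ∑ k : Fin n, Nat.card {H : SimpleGraph (Fin n) // H.IsTree ∧
          ∀ m, (H.neighborSet m).ncard = δ (i₀.succAbove m) - (if m = k then 1 else 0)} := by
  haveI : NeZero n := ⟨by omega⟩
  rw [← aux_nat_card_sigma]
  have hprop : ∀ (k : Fin n) (H : SimpleGraph (Fin n)), H.IsTree →
      (∀ m, (H.neighborSet m).ncard = δ (i₀.succAbove m) - (if m = k then 1 else 0)) →
      (addLeaf i₀ k H).IsTree ∧ ∀ i, ((addLeaf i₀ k H).neighborSet i).ncard = δ i := by
    intro k H hH hdeg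
    refine ⟨⟨addLeaf_connected hH.isConnected, addLeaf_acyclic hH.IsAcyclic⟩, ?_⟩
    intro i
    by_cases hi : i₀ = i
    · subst hi
      rw [addLeaf_ncard_left, hi₀]
    · obtain ⟨m, rfl⟩ := Fin.exists_succAbove_eq (Ne.symm hi)
      rw [addLeaf_ncard_emb m, hdeg m]
      have := hδ (i₀.succAbove m)
      split_ifs <;> omega
  refine (Nat.card_eq_of_bijective (fun x => ⟨addLeaf i₀ x.1 x.2.1,
    hprop x.1 x.2.1 x.2.2.1 x.2.2.2⟩) ⟨?_, ?_⟩).symm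
  · -- injective
    rintro ⟨k, H, hH⟩ ⟨k', H', hH'⟩ h
    simp only [Subtype.mk.injEq] at h
    have hk : i₀.succAbove k = i₀.succAbove k' := by
      have h2 := congrArg (fun G => SimpleGraph.neighborSet G i₀) h
      simp only [addLeaf_nbhd_left] at h2
      exact Set.singleton_eq_singleton_iff.1 h2
    have hkk : k = k' := Fin.succAbove_right_injective hk
    subst hkk
    have hHH : H = H' := by
      have := congrArg (fun G => SimpleGraph.comap i₀.succAbove G) h
      simpa only [comap_addLeaf] using this
    subst hHH
    rfl
  · -- surjective
    rintro ⟨G, hG, hdeg⟩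
    have h1 : (G.neighborSet i₀).ncard = 1 := by rw [hdeg i₀, hi₀]
    obtain ⟨j, hj⟩ := Set.ncard_eq_one.1 h1
    have hadj : G.Adj i₀ j := by
      have : j ∈ G.neighborSet i₀ := by rw [hj]; rfl
      exact this
    obtain ⟨k, hk⟩ := Fin.exists_succAbove_eq (Ne.symm hadj.ne)
    have hnbj : ∀ y, G.Adj i₀ y → y = j := by
      intro y hy
      have : y ∈ G.neighborSet i₀ := hy
      rwa [hj, Set.mem_singleton_iff] at this
    have hnb : ∀ y, G.Adj i₀ y → y = i₀.succAbove k := fun y hy => (hnbj y hy).trans hk.symm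
    refine ⟨⟨k, ⟨G.comap i₀.succAbove, ⟨⟨comap_connected hG.isConnected hnbj,
      comap_acyclic hG.IsAcyclic⟩, ?_⟩⟩⟩, ?_⟩
    · intro m
      rw [comap_ncard m hj, hdeg (i₀.succAbove m)]
      congr 1
      have hiff : i₀.succAbove m = j ↔ m = k := by
        constructor
        · intro hh; exact Fin.succAbove_right_injective (by rw [hh, ← hk])
        · intro hh; rw [hh, hk]
      by_cases hc : m = k
      · rw [if_pos hc, if_pos (hiff.2 hc)]
      · rw [if_neg hc, if_neg (fun hh => hc (hiff.1 hh))]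
    · apply Subtype.ext
      exact addLeaf_comap_eq hnb (by rw [hk]; exact hadj)

end Add


lemma fin2_resolve : ∀ a b x : Fin 2, x ≠ a → b ≠ a → x = b := by decide

lemma two_tree_eq_top {G : SimpleGraph (Fin 2)} (hG : G.Connected) : G = ⊤ := by
  ext a b
  simp only [top_adj]
  constructor
  · exact fun h => h.ne
  · intro hab
    obtain ⟨p⟩ := hG a b
    cases p with
    | nil => exact absurd rfl hab
    | @cons _ x _ h q =>
      rwa [fin2_resolve a b x h.ne' (Ne.symm hab)] at h

lemma top_two_isTree : (⊤ : SimpleGraph (Fin 2)).IsTree := by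
  constructor
  · exact connected_top
  · intro v c hc
    have h3 := hc.three_le_length
    have hnd : c.support.tail.Nodup := hc.2
    have hlen : c.support.tail.length = c.length := by
      have := c.length_support
      simp [List.length_tail, this]
    have hle := hnd.length_le_card
    rw [hlen] at hle
    simp only [Fintype.card_fin] at hle
    omega

lemma top_two_ncard (v : Fin 2) : ((⊤ : SimpleGraph (Fin 2)).neighborSet v).ncard = 1 := by
  have h : (⊤ : SimpleGraph (Fin 2)).neighborSet v = {v + 1} := by
    ext x
    simp only [mem_neighborSet, top_adj, Set.mem_singleton_iff]
    revert v x; decide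
  rw [h, Set.ncard_singleton]

lemma base_case (δ : Fin 2 → ℕ) (hδ : ∀ i, 1 ≤ δ i) (hsum : ∑ i, δ i = 2 * (2 - 1)) :
    Nat.card {G : SimpleGraph (Fin 2) // G.IsTree ∧ ∀ i, (G.neighborSet i).ncard = δ i}
      * ∏ i, (δ i - 1).factorial = (2 - 2).factorial := by
  have h1 : ∑ i : Fin 2, (δ i - 1) = 0 := by
    have h2 : ∑ i : Fin 2, ((δ i - 1) + 1) = ∑ i : Fin 2, δ i :=
      Finset.sum_congr rfl (fun i _ => by have := hδ i; omega)
    rw [Finset.sum_add_distrib] at h2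
    simp only [Finset.sum_const, Finset.card_univ, Fintype.card_fin, smul_eq_mul, mul_one] at h2
    omega
  have hδ1 : ∀ i, δ i = 1 := by
    intro i
    have := Finset.sum_eq_zero_iff.1 h1 i (Finset.mem_univ i)
    have := hδ i
    omega
  have hprod : ∏ i, (δ i - 1).factorial = 1 := by
    simp [hδ1]
  rw [hprod, mul_one]
  show _ = 1
  rw [Nat.card_eq_one_iff_unique]
  constructor
  · constructor
    rintro ⟨G, hG, _⟩ ⟨G', hG', _⟩
    exact Subtype.ext ((two_tree_eq_top hG.isConnected).trans (two_tree_eq_top hG'.isConnected).symm)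
  · exact ⟨⟨⊤, top_two_isTree, fun i => by rw [top_two_ncard, hδ1]⟩⟩

lemma step_case {n : ℕ} (hn : 2 ≤ n)
    (ih : ∀ δ : Fin n → ℕ, (∀ i, 1 ≤ δ i) → ∑ i, δ i = 2 * (n - 1) →
      Nat.card {G : SimpleGraph (Fin n) // G.IsTree ∧ ∀ i, (G.neighborSet i).ncard = δ i}
        * ∏ i, (δ i - 1).factorial = (n - 2).factorial)
    (δ : Fin (n+1) → ℕ) (hδ : ∀ i, 1 ≤ δ i) (hsum : ∑ i, δ i = 2 * (n + 1 - 1)) :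
    Nat.card {G : SimpleGraph (Fin (n+1)) // G.IsTree ∧ ∀ i, (G.neighborSet i).ncard = δ i}
      * ∏ i, (δ i - 1).factorial = (n + 1 - 2).factorial := by
  simp only [Nat.add_sub_cancel] at hsum
  have hex : ∃ i, δ i = 1 := by
    by_contra hco
    push_neg at hco
    have h2 : ∀ i ∈ Finset.univ, 2 ≤ δ i := fun i _ => by
      have := hδ i; have := hco i; omega
    have hle := Finset.sum_le_sum h2
    simp only [Finset.sum_const, Finset.card_univ, Fintype.card_fin, smul_eq_mul] at hle
    omega
  obtain ⟨i₀, hi₀⟩ := hex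
  have hsum' : ∑ m : Fin n, δ (i₀.succAbove m) = 2 * n - 1 := by
    have h := Fin.sum_univ_succAbove δ i₀
    omega
  rw [card_eq hn i₀ δ hδ hi₀, Finset.sum_mul]
  have hP : ∏ i, (δ i - 1).factorial = ∏ m : Fin n, (δ (i₀.succAbove m) - 1).factorial := by
    rw [Fin.prod_univ_succAbove (fun i => (δ i - 1).factorial) i₀, hi₀]
    simp
  have hterm : ∀ k : Fin n,
      Nat.card {H : SimpleGraph (Fin n) // H.IsTree ∧
          ∀ m, (H.neighborSet m).ncard = δ (i₀.succAbove m) - (if m = k then 1 else 0)}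
        * ∏ i, (δ i - 1).factorial
      = (δ (i₀.succAbove k) - 1) * (n - 2).factorial := by
    intro k
    by_cases h2 : 2 ≤ δ (i₀.succAbove k)
    · have hD1 : ∀ m, 1 ≤ δ (i₀.succAbove m) - (if m = k then 1 else 0) := by
        intro m
        have := hδ (i₀.succAbove m)
        split_ifs with h
        · subst h; omega
        · omega
      have hDsum : ∑ m : Fin n, (δ (i₀.succAbove m) - (if m = k then 1 else 0)) = 2 * (n - 1) := by
        have hsplit : ∑ m : Fin n, (if m = k then (1:ℕ) else 0) = 1 := by
          simp
        have hadd : ∑ m : Fin n, ((δ (i₀.succAbove m) - (if m = k then 1 else 0))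
            + (if m = k then 1 else 0)) = ∑ m : Fin n, δ (i₀.succAbove m) := by
          refine Finset.sum_congr rfl fun m _ => ?_
          have := hδ (i₀.succAbove m)
          split_ifs with h
          · subst h; omega
          · omega
        rw [Finset.sum_add_distrib, hsplit] at hadd
        omega
      have hIH := ih _ hD1 hDsum
      have hfac : ∏ m : Fin n, (δ (i₀.succAbove m) - 1).factorial
          = (δ (i₀.succAbove k) - 1)
            * ∏ m : Fin n, ((δ (i₀.succAbove m) - (if m = k then 1 else 0)) - 1).factorial := by
        rw [← Finset.prod_erase_mul Finset.univ _ (Finset.mem_univ k),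
          ← Finset.prod_erase_mul Finset.univ
            (fun m => ((δ (i₀.succAbove m) - (if m = k then 1 else 0)) - 1).factorial)
            (Finset.mem_univ k)]
        have hcong : ∏ m ∈ Finset.univ.erase k,
            ((δ (i₀.succAbove m) - (if m = k then 1 else 0)) - 1).factorial
            = ∏ m ∈ Finset.univ.erase k, (δ (i₀.succAbove m) - 1).factorial :=
          Finset.prod_congr rfl fun m hm => by
            rw [if_neg (Finset.ne_of_mem_erase hm), Nat.sub_zero]
        rw [hcong, if_pos rfl]
        obtain ⟨d, hd⟩ : ∃ d, δ (i₀.succAbove k) = d + 2 := ⟨δ (i₀.succAbove k) - 2, by omega⟩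
        rw [hd]
        simp only [show d + 2 - 1 - 1 = d from by omega, show d + 2 - 1 = d + 1 from by omega,
          show d + 1 - 1 = d from by omega, Nat.factorial_succ]
        ring
      rw [hP, hfac, ← mul_assoc, mul_comm _ (δ (i₀.succAbove k) - 1), mul_assoc, hIH]
    · have h1 : δ (i₀.succAbove k) = 1 := by have := hδ (i₀.succAbove k); omega
      have hcard : Nat.card {H : SimpleGraph (Fin n) // H.IsTree ∧
          ∀ m, (H.neighborSet m).ncard = δ (i₀.succAbove m) - (if m = k then 1 else 0)} = 0 := by
        rw [Nat.card_eq_zero]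
        left
        refine ⟨?_⟩
        rintro ⟨H, hH, hdeg⟩
        have h0 : (H.neighborSet k).ncard = 0 := by
          rw [hdeg k, if_pos rfl, h1]
        obtain ⟨w, hw⟩ := Fintype.exists_ne_of_one_lt_card (by simp; omega) k
        obtain ⟨x, hx⟩ := aux_adj_of_connected hH.isConnected (Ne.symm hw)
        have hmem : x ∈ H.neighborSet k := hx
        rw [Set.ncard_eq_zero (Set.toFinite _)] at h0
        rw [h0] at hmem
        exact hmem
      rw [hcard, zero_mul, h1]
      simp
  rw [Finset.sum_congr rfl (fun k _ => hterm k), ← Finset.sum_mul]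
  have hsumk : ∑ k : Fin n, (δ (i₀.succAbove k) - 1) = n - 1 := by
    have hadd : ∑ k : Fin n, ((δ (i₀.succAbove k) - 1) + 1) = ∑ k : Fin n, δ (i₀.succAbove k) :=
      Finset.sum_congr rfl fun k _ => by have := hδ (i₀.succAbove k); omega
    rw [Finset.sum_add_distrib] at hadd
    simp only [Finset.sum_const, Finset.card_univ, Fintype.card_fin, smul_eq_mul, mul_one] at hadd
    omega
  rw [hsumk]
  obtain ⟨d, hd⟩ : ∃ d, n = d + 2 := ⟨n - 2, by omega⟩
  subst hd
  have e1 : d + 2 - 1 = d + 1 := by omega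
  have e2 : d + 2 - 2 = d := by omega
  have e3 : d + 2 + 1 - 2 = d + 1 := by omega
  rw [e1, e2, e3, Nat.factorial_succ]


/-- Prüfer's theorem: for `n ≥ 2` and positive integers `δ₁,…,δₙ` with
`∑ δᵢ = 2(n−1)`, the number of labeled trees on `{1,…,n}` in which vertex `i`
has degree `δᵢ` equals `(n−2)! / ∏ (δᵢ − 1)!` (stated multiplicatively). -/
theorem prufer_count_trees (n : ℕ) (hn : 2 ≤ n) (δ : Fin n → ℕ)
    (hδ : ∀ i, 1 ≤ δ i) (hsum : ∑ i, δ i = 2 * (n - 1)) :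
    Nat.card {G : SimpleGraph (Fin n) // G.IsTree ∧ ∀ i, (G.neighborSet i).ncard = δ i}
        * ∏ i, (δ i - 1).factorial
      = (n - 2).factorial := by
  have key : ∀ N : ℕ, 2 ≤ N → ∀ δ : Fin N → ℕ, (∀ i, 1 ≤ δ i) → ∑ i, δ i = 2 * (N - 1) →
      Nat.card {G : SimpleGraph (Fin N) // G.IsTree ∧ ∀ i, (G.neighborSet i).ncard = δ i}
        * ∏ i, (δ i - 1).factorial = (N - 2).factorial := by
    intro N hN
    induction N, hN using Nat.le_induction with
    | base => exact base_case
    | succ m hm ihm => exact step_case hm ihm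
  exact key n hn δ hδ hsum
end

section
/- Tree bound for Ursell functions: Let ξ : Ω × Ω → ℝ be symmetric with −1 ≤ ξ(ω,ω̃) ≤ 0 for all ω, ω̃ (e.g. ξ = e^{−V} − 1 with V ≥ 0 symmetric). Define the Ursell function φ(ω₁,…,ωₙ) = (1/n!) ∑_{G} ∏_{{i,j}∈G} ξ(ω_i,ω_j), where the sum is over all connected graphs G on {1,…,n}. Then |φ(ω₁,…,ωₙ)| ≤ (1/n!) ∑_{T} ∏_{{i,j}∈T} |ξ(ω_i,ω_j)|, where the sum is over all trees T on {1,…,n}. -/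
open scoped Classical

namespace UrsellTreeBoundAux

open Finset SimpleGraph

set_option linter.unusedSectionVars false

variable {n : ℕ} [NeZero n]

/-- Candidate parents of `v`: neighbours one level closer to the root `0`. -/
noncomputable def pset (G : SimpleGraph (Fin n)) (v : Fin n) : Finset (Fin n) :=
  Finset.univ.filter fun u => G.Adj u v ∧ G.dist 0 u + 1 = G.dist 0 v

/-- The parent of `v`: the least candidate parent. -/
noncomputable def par (G : SimpleGraph (Fin n)) (v : Fin n) : Fin n :=
  if h : (pset G v).Nonempty then (pset G v).min' h else 0

lemma mem_pset {G : SimpleGraph (Fin n)} {u v : Fin n} :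
    u ∈ pset G v ↔ G.Adj u v ∧ G.dist 0 u + 1 = G.dist 0 v := by
  simp [pset]

lemma pset_nonempty {G : SimpleGraph (Fin n)} (hG : G.Connected) {v : Fin n} (hv : v ≠ 0) :
    (pset G v).Nonempty := by
  obtain ⟨p, hp⟩ := hG.exists_walk_length_eq_dist 0 v
  have hd : 0 < G.dist 0 v := hG.pos_dist_of_ne (Ne.symm hv)
  have hnn : ¬ p.reverse.Nil := Walk.not_nil_of_ne hv
  obtain ⟨u, hadj, q, hq⟩ := Walk.not_nil_iff.mp hnn
  have hlen : q.length + 1 = G.dist 0 v := by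
    have := congrArg Walk.length hq
    simp only [Walk.length_reverse, Walk.length_cons] at this
    omega
  have h1 : G.dist 0 u ≤ q.length := by
    have := SimpleGraph.dist_le q.reverse
    simpa using this
  have h2 : G.dist 0 v ≤ G.dist 0 u + 1 := by
    have ht := hG.dist_triangle (u := (0 : Fin n)) (v := u) (w := v)
    have he : G.dist u v ≤ 1 := by
      have := SimpleGraph.dist_le (Walk.cons hadj.symm Walk.nil)
      simpa using this
    omega
  exact ⟨u, mem_pset.mpr ⟨hadj.symm, by omega⟩⟩

lemma par_mem {G : SimpleGraph (Fin n)} (hG : G.Connected) {v : Fin n} (hv : v ≠ 0) :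
    par G v ∈ pset G v := by
  rw [par, dif_pos (pset_nonempty hG hv)]
  exact Finset.min'_mem _ _

lemma par_adj {G : SimpleGraph (Fin n)} (hG : G.Connected) {v : Fin n} (hv : v ≠ 0) :
    G.Adj (par G v) v := (mem_pset.mp (par_mem hG hv)).1

lemma par_dist {G : SimpleGraph (Fin n)} (hG : G.Connected) {v : Fin n} (hv : v ≠ 0) :
    G.dist 0 (par G v) + 1 = G.dist 0 v := (mem_pset.mp (par_mem hG hv)).2

lemma par_min {G : SimpleGraph (Fin n)} {v u : Fin n} (hu : u ∈ pset G v) :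
    par G v ≤ u := by
  rw [par, dif_pos ⟨u, hu⟩]
  exact Finset.min'_le _ _ hu

lemma par_eq_of {G : SimpleGraph (Fin n)} {v u : Fin n} (h1 : u ∈ pset G v)
    (h2 : ∀ w ∈ pset G v, u ≤ w) : par G v = u := by
  rw [par, dif_pos ⟨u, h1⟩]
  exact le_antisymm (Finset.min'_le _ _ h1) (h2 _ (Finset.min'_mem _ _))

lemma par_zero (G : SimpleGraph (Fin n)) : par G 0 = 0 := by
  rw [par, dif_neg]
  rintro ⟨u, hu⟩
  rw [mem_pset] at hu
  simp [SimpleGraph.dist_self] at hu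

lemma dist_zero_iff {G : SimpleGraph (Fin n)} (hG : G.Connected) {v : Fin n} :
    G.dist 0 v = 0 ↔ v = 0 := by
  rw [hG.dist_eq_zero_iff]
  exact eq_comm

/-- A "good" graph: connected, and each edge joins a vertex to its canonical parent. -/
def Good (T : SimpleGraph (Fin n)) : Prop :=
  T.Connected ∧ ∀ a b, T.Adj a b →
    (T.dist 0 b = T.dist 0 a + 1 ∧ a = par T b) ∨
    (T.dist 0 a = T.dist 0 b + 1 ∧ b = par T a)

/-- Descendant relation (via iterated parents). -/
def desc (T : SimpleGraph (Fin n)) (v w : Fin n) : Prop :=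
  ∃ k, (par T)^[k] w = v

lemma desc_self {T : SimpleGraph (Fin n)} (v : Fin n) : desc T v v := ⟨0, rfl⟩

lemma desc_of_desc_par {T : SimpleGraph (Fin n)} {v w : Fin n}
    (h : desc T v (par T w)) : desc T v w := by
  obtain ⟨k, hk⟩ := h
  exact ⟨k + 1, by rw [Function.iterate_succ_apply]; exact hk⟩

lemma desc_cases {T : SimpleGraph (Fin n)} {v w : Fin n} (h : desc T v w) :
    w = v ∨ desc T v (par T w) := by
  obtain ⟨k, hk⟩ := h
  cases k with
  | zero => exact Or.inl hk
  | succ j => exact Or.inr ⟨j, by rw [Function.iterate_succ_apply] at hk; exact hk⟩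

lemma dist_par_le {T : SimpleGraph (Fin n)} (hT : T.Connected) (w : Fin n) :
    T.dist 0 (par T w) ≤ T.dist 0 w := by
  by_cases hw : w = 0
  · subst hw; rw [par_zero]
  · have := par_dist hT hw; omega

lemma dist_iterate_par_le {T : SimpleGraph (Fin n)} (hT : T.Connected) (k : ℕ) (w : Fin n) :
    T.dist 0 ((par T)^[k] w) ≤ T.dist 0 w := by
  induction k generalizing w with
  | zero => simp
  | succ j ih =>
    rw [Function.iterate_succ_apply]
    exact le_trans (ih (par T w)) (dist_par_le hT w)

lemma not_desc_par {T : SimpleGraph (Fin n)} (hT : T.Connected) {v : Fin n} (hv : v ≠ 0) :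
    ¬ desc T v (par T v) := by
  rintro ⟨k, hk⟩
  have h1 : T.dist 0 ((par T)^[k] (par T v)) ≤ T.dist 0 (par T v) :=
    dist_iterate_par_le hT k (par T v)
  rw [hk] at h1
  have := par_dist hT hv
  omega

lemma walk_not_desc {T : SimpleGraph (Fin n)} (hT : Good T) {v : Fin n}
    {x y : Fin n} (p : T.Walk x y) (hx : ¬ desc T v x)
    (he : s(par T v, v) ∉ p.edges) : ¬ desc T v y := by
  induction p with
  | nil => exact hx
  | @cons a z y h q ih =>
    simp only [Walk.edges_cons, List.mem_cons, not_or] at he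
    refine ih ?_ he.2
    intro hz
    rcases hT.2 a z h with ⟨hd, hpar⟩ | ⟨hd, hpar⟩
    · -- a = par T z
      rcases desc_cases hz with hzv | hz'
      · subst hzv
        exact he.1 (by rw [hpar])
      · rw [← hpar] at hz'
        exact hx hz'
    · -- z = par T a
      rw [hpar] at hz
      exact hx (desc_of_desc_par hz)

lemma good_ne_zero_of_dist_succ {T : SimpleGraph (Fin n)} {a b : Fin n}
    (hd : T.dist 0 b = T.dist 0 a + 1) : b ≠ 0 := by
  intro h
  subst h
  simp [SimpleGraph.dist_self] at hd

theorem good_isAcyclic {T : SimpleGraph (Fin n)} (hT : Good T) : T.IsAcyclic := by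
  rw [isAcyclic_iff_forall_edge_isBridge]
  intro e he
  induction e using Sym2.ind with
  | _ a b =>
    have hab : T.Adj a b := (SimpleGraph.mem_edgeSet T).mp he
    rw [isBridge_iff_adj_and_forall_walk_mem_edges]
    intro p
    by_contra hep
    rcases hT.2 a b hab with ⟨hd, hpar⟩ | ⟨hd, hpar⟩
    · have hb0 : b ≠ 0 := good_ne_zero_of_dist_succ hd
      have hnd : ¬ desc T b a := by rw [hpar]; exact not_desc_par hT.1 hb0
      have : s(par T b, b) ∉ p.edges := by rw [← hpar]; exact hep
      exact walk_not_desc hT p hnd this (desc_self b)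
    · have ha0 : a ≠ 0 := good_ne_zero_of_dist_succ hd
      have hnd : ¬ desc T a b := by rw [hpar]; exact not_desc_par hT.1 ha0
      have : s(par T a, a) ∉ p.reverse.edges := by
        rw [← hpar, Walk.edges_reverse, List.mem_reverse, Sym2.eq_swap]
        exact hep
      exact walk_not_desc hT p.reverse hnd this (desc_self a)

theorem good_isTree {T : SimpleGraph (Fin n)} (hT : Good T) : T.IsTree :=
  ⟨hT.1, good_isAcyclic hT⟩

/-- The Penrose tree of a connected graph. -/
noncomputable def ptree (G : SimpleGraph (Fin n)) : SimpleGraph (Fin n) where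
  Adj a b := G.Adj a b ∧ ((b ≠ 0 ∧ a = par G b) ∨ (a ≠ 0 ∧ b = par G a))
  symm := ⟨by
    rintro a b ⟨h, h2⟩
    exact ⟨h.symm, h2.symm⟩⟩
  loopless := ⟨fun a h => G.irrefl h.1⟩

lemma ptree_le (G : SimpleGraph (Fin n)) : ptree G ≤ G := fun _ _ h => h.1

lemma ptree_adj_par {G : SimpleGraph (Fin n)} (hG : G.Connected) {v : Fin n} (hv : v ≠ 0) :
    (ptree G).Adj (par G v) v :=
  ⟨par_adj hG hv, Or.inl ⟨hv, rfl⟩⟩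

lemma ptree_reach {G : SimpleGraph (Fin n)} (hG : G.Connected) (v : Fin n) :
    (ptree G).Reachable 0 v := by
  have key : ∀ k v, G.dist 0 v = k → (ptree G).Reachable 0 v := by
    intro k
    induction k using Nat.strong_induction_on with
    | _ k ih =>
      intro v hv
      by_cases h0 : v = 0
      · subst h0; exact Reachable.refl 0
      · have hd := par_dist hG h0
        have hlt : G.dist 0 (par G v) < k := by omega
        exact (ih _ hlt (par G v) rfl).trans (ptree_adj_par hG h0).reachable
  exact key _ v rfl

lemma ptree_connected {G : SimpleGraph (Fin n)} (hG : G.Connected) :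
    (ptree G).Connected := by
  rw [connected_iff]
  exact ⟨fun u v => (ptree_reach hG u).symm.trans (ptree_reach hG v), ⟨0⟩⟩

lemma dist_ptree {G : SimpleGraph (Fin n)} (hG : G.Connected) (v : Fin n) :
    (ptree G).dist 0 v = G.dist 0 v := by
  refine le_antisymm ?_ ?_
  · have key : ∀ k v, G.dist 0 v = k → (ptree G).dist 0 v ≤ k := by
      intro k
      induction k using Nat.strong_induction_on with
      | _ k ih =>
        intro v hv
        by_cases h0 : v = 0
        · subst h0; simp [SimpleGraph.dist_self]
        · have hd := par_dist hG h0
          have hlt : G.dist 0 (par G v) < k := by omega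
          have h1 := ih _ hlt (par G v) rfl
          have h2 := (ptree_connected hG).dist_triangle
            (u := (0 : Fin n)) (v := par G v) (w := v)
          have h3 : (ptree G).dist (par G v) v ≤ 1 := by
            have := SimpleGraph.dist_le (Walk.cons (ptree_adj_par hG h0) Walk.nil)
            simpa using this
          omega
    exact key _ v rfl
  · obtain ⟨p, hp⟩ := (ptree_connected hG).exists_walk_length_eq_dist 0 v
    calc G.dist 0 v ≤ (p.mapLe (ptree_le G)).length := SimpleGraph.dist_le _
      _ = p.length := Walk.length_map _ _
      _ = (ptree G).dist 0 v := hp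

lemma par_ptree {G : SimpleGraph (Fin n)} (hG : G.Connected) {v : Fin n} (hv : v ≠ 0) :
    par (ptree G) v = par G v := by
  apply par_eq_of
  · rw [mem_pset, dist_ptree hG, dist_ptree hG]
    exact ⟨ptree_adj_par hG hv, par_dist hG hv⟩
  · intro w hw
    rw [mem_pset, dist_ptree hG, dist_ptree hG] at hw
    obtain ⟨⟨hGadj, hor⟩, hdist⟩ := hw
    rcases hor with ⟨_, rfl⟩ | ⟨hw0, hvw⟩
    · exact le_refl _
    · exfalso
      have := par_dist hG hw0
      rw [← hvw] at this
      omega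

lemma good_ptree {G : SimpleGraph (Fin n)} (hG : G.Connected) : Good (ptree G) := by
  refine ⟨ptree_connected hG, fun a b hab => ?_⟩
  obtain ⟨hGadj, hor⟩ := hab
  rcases hor with ⟨hb0, rfl⟩ | ⟨ha0, rfl⟩
  · left
    rw [dist_ptree hG, dist_ptree hG, par_ptree hG hb0]
    exact ⟨(par_dist hG hb0).symm, rfl⟩
  · right
    rw [dist_ptree hG, dist_ptree hG, par_ptree hG ha0]
    exact ⟨(par_dist hG ha0).symm, rfl⟩

/-- The maximal graph with a given Penrose tree. -/
noncomputable def amb (T : SimpleGraph (Fin n)) : SimpleGraph (Fin n) where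
  Adj a b := a ≠ b ∧ (T.dist 0 a = T.dist 0 b ∨
    (T.dist 0 b = T.dist 0 a + 1 ∧ par T b ≤ a) ∨
    (T.dist 0 a = T.dist 0 b + 1 ∧ par T a ≤ b))
  symm := ⟨by
    rintro a b ⟨h, h2⟩
    refine ⟨h.symm, ?_⟩
    rcases h2 with h2 | h2 | h2
    · exact Or.inl h2.symm
    · exact Or.inr (Or.inr h2)
    · exact Or.inr (Or.inl h2)⟩
  loopless := ⟨fun a h => h.1 rfl⟩

theorem fiber_iff {T : SimpleGraph (Fin n)} (hT : Good T) (G : SimpleGraph (Fin n)) :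
    (G.Connected ∧ ptree G = T) ↔ (T ≤ G ∧ G ≤ amb T) := by
  constructor
  · rintro ⟨hG, rfl⟩
    refine ⟨ptree_le G, fun a b hab => ?_⟩
    refine ⟨hab.ne, ?_⟩
    have h1 : G.dist 0 b ≤ G.dist 0 a + 1 := by
      have ht := hG.dist_triangle (u := (0 : Fin n)) (v := a) (w := b)
      have he : G.dist a b ≤ 1 := by
        have := SimpleGraph.dist_le (Walk.cons hab Walk.nil)
        simpa using this
      omega
    have h2 : G.dist 0 a ≤ G.dist 0 b + 1 := by
      have ht := hG.dist_triangle (u := (0 : Fin n)) (v := b) (w := a)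
      have he : G.dist b a ≤ 1 := by
        have := SimpleGraph.dist_le (Walk.cons hab.symm Walk.nil)
        simpa using this
      omega
    rcases Nat.lt_trichotomy (G.dist 0 a) (G.dist 0 b) with h | h | h
    · right; left
      have hd : G.dist 0 b = G.dist 0 a + 1 := by omega
      have hb0 : b ≠ 0 := by
        intro hb; subst hb; simp [SimpleGraph.dist_self] at hd
      rw [dist_ptree hG, dist_ptree hG, par_ptree hG hb0]
      exact ⟨hd, par_min (mem_pset.mpr ⟨hab, hd.symm⟩)⟩
    · left; rw [dist_ptree hG, dist_ptree hG]; exact h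
    · right; right
      have hd : G.dist 0 a = G.dist 0 b + 1 := by omega
      have ha0 : a ≠ 0 := by
        intro ha; subst ha; simp [SimpleGraph.dist_self] at hd
      rw [dist_ptree hG, dist_ptree hG, par_ptree hG ha0]
      exact ⟨hd, par_min (mem_pset.mpr ⟨hab.symm, hd.symm⟩)⟩
  · rintro ⟨hTG, hGA⟩
    have hGc : G.Connected := hT.1.mono hTG
    have hstep : ∀ a b : Fin n, G.Adj a b → T.dist 0 b ≤ T.dist 0 a + 1 := by
      intro a b hab
      rcases (hGA hab).2 with h | ⟨h, _⟩ | ⟨h, _⟩ <;> omega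
    have hlev : ∀ v, G.dist 0 v = T.dist 0 v := by
      intro v
      refine le_antisymm ?_ ?_
      · obtain ⟨p, hp⟩ := hT.1.exists_walk_length_eq_dist 0 v
        calc G.dist 0 v ≤ (p.mapLe hTG).length := SimpleGraph.dist_le _
          _ = p.length := Walk.length_map _ _
          _ = T.dist 0 v := hp
      · obtain ⟨q, hq⟩ := hGc.exists_walk_length_eq_dist 0 v
        have key : ∀ (x y : Fin n) (p : G.Walk x y), T.dist 0 y ≤ T.dist 0 x + p.length := by
          intro x y p
          induction p with
          | nil => simp
          | @cons a z y h q ih =>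
            have := hstep a z h
            simp only [Walk.length_cons]
            omega
        have := key 0 v q
        rw [hq, SimpleGraph.dist_self] at this
        omega
    have hpar : ∀ v : Fin n, v ≠ 0 → par G v = par T v := by
      intro v hv
      apply par_eq_of
      · rw [mem_pset, hlev, hlev]
        exact ⟨hTG (par_adj hT.1 hv), par_dist hT.1 hv⟩
      · intro w hw
        rw [mem_pset, hlev, hlev] at hw
        obtain ⟨hadj, hdist⟩ := hw
        rcases (hGA hadj).2 with h | ⟨h, hle⟩ | ⟨h, _⟩
        · omega
        · exact hle
        · omega
    refine ⟨hGc, ?_⟩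
    ext a b
    constructor
    · rintro ⟨hGab, ⟨hb0, rfl⟩ | ⟨ha0, rfl⟩⟩
      · rw [hpar b hb0]
        exact par_adj hT.1 hb0
      · rw [hpar a ha0]
        exact (par_adj hT.1 ha0).symm
    · intro hTab
      rcases hT.2 a b hTab with ⟨hd, hpab⟩ | ⟨hd, hpba⟩
      · have hb0 : b ≠ 0 := good_ne_zero_of_dist_succ hd
        exact ⟨hTG hTab, Or.inl ⟨hb0, by rw [hpar b hb0]; exact hpab⟩⟩
      · have ha0 : a ≠ 0 := good_ne_zero_of_dist_succ hd
        exact ⟨hTG hTab, Or.inr ⟨ha0, by rw [hpar a ha0]; exact hpba⟩⟩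

/-! ### Sums over intervals of graphs -/

lemma edgeFinset_sup_fromEdgeSet (T A : SimpleGraph (Fin n)) (S : Finset (Sym2 (Fin n)))
    (hS : S ⊆ A.edgeFinset) :
    (T ⊔ SimpleGraph.fromEdgeSet (S : Set (Sym2 (Fin n)))).edgeFinset = T.edgeFinset ∪ S := by
  ext e
  simp only [SimpleGraph.mem_edgeFinset, SimpleGraph.edgeSet_sup, SimpleGraph.edgeSet_fromEdgeSet,
    Set.mem_union, Set.mem_diff, Finset.mem_coe, Finset.mem_union, Set.mem_setOf_eq]
  constructor
  · rintro (h | ⟨h, _⟩)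
    · exact Or.inl h
    · exact Or.inr h
  · rintro (h | h)
    · exact Or.inl h
    · refine Or.inr ⟨h, ?_⟩
      exact SimpleGraph.not_isDiag_of_mem_edgeSet A ((SimpleGraph.mem_edgeFinset).mp (hS h))

lemma sum_interval (T A : SimpleGraph (Fin n)) (hTA : T ≤ A) (f : Sym2 (Fin n) → ℝ) :
    ∑ G ∈ Finset.univ.filter (fun G : SimpleGraph (Fin n) => T ≤ G ∧ G ≤ A),
        ∏ e ∈ G.edgeFinset, f e
      = (∏ e ∈ T.edgeFinset, f e) *
        ∏ e ∈ A.edgeFinset \ T.edgeFinset, (1 + f e) := by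
  have expand : ∏ e ∈ A.edgeFinset \ T.edgeFinset, (1 + f e)
      = ∑ S ∈ (A.edgeFinset \ T.edgeFinset).powerset, ∏ e ∈ S, f e := by
    have := Finset.prod_add f (fun _ => (1 : ℝ)) (A.edgeFinset \ T.edgeFinset)
    simp only [Finset.prod_const_one, mul_one] at this
    rw [← this]
    exact Finset.prod_congr rfl fun e _ => by ring
  rw [expand, Finset.mul_sum]
  refine Finset.sum_nbij' (fun G => G.edgeFinset \ T.edgeFinset)
    (fun S => T ⊔ SimpleGraph.fromEdgeSet (S : Set (Sym2 (Fin n)))) ?_ ?_ ?_ ?_ ?_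
  · intro G hG
    rw [Finset.mem_filter] at hG
    rw [Finset.mem_powerset]
    exact Finset.sdiff_subset_sdiff (SimpleGraph.edgeFinset_mono hG.2.2) le_rfl
  · intro S hS
    rw [Finset.mem_powerset] at hS
    have hSA : S ⊆ A.edgeFinset := hS.trans (Finset.sdiff_subset)
    rw [Finset.mem_filter]
    refine ⟨Finset.mem_univ _, le_sup_left, sup_le hTA ?_⟩
    calc SimpleGraph.fromEdgeSet (S : Set (Sym2 (Fin n)))
        ≤ SimpleGraph.fromEdgeSet A.edgeSet := by
          apply SimpleGraph.fromEdgeSet_mono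
          intro e he
          exact (SimpleGraph.mem_edgeFinset).mp (hSA he)
      _ = A := SimpleGraph.fromEdgeSet_edgeSet A
  · intro G hG
    rw [Finset.mem_filter] at hG
    have hsub : G.edgeFinset \ T.edgeFinset ⊆ A.edgeFinset :=
      (Finset.sdiff_subset).trans (SimpleGraph.edgeFinset_mono hG.2.2)
    rw [← SimpleGraph.edgeFinset_inj,
      edgeFinset_sup_fromEdgeSet T A _ hsub,
      Finset.union_sdiff_of_subset (SimpleGraph.edgeFinset_mono hG.2.1)]
  · intro S hS
    rw [Finset.mem_powerset] at hS
    have hSA : S ⊆ A.edgeFinset := hS.trans (Finset.sdiff_subset)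
    ext e
    simp only [Finset.mem_sdiff, SimpleGraph.mem_edgeFinset, SimpleGraph.edgeSet_sup,
      SimpleGraph.edgeSet_fromEdgeSet, Set.mem_union, Set.mem_diff, Finset.mem_coe,
      Set.mem_setOf_eq]
    constructor
    · rintro ⟨h1 | ⟨h1, _⟩, h2⟩
      · exact absurd h1 h2
      · exact h1
    · intro he
      have heA : e ∈ A.edgeSet := (SimpleGraph.mem_edgeFinset).mp (hSA he)
      have hnT : e ∉ T.edgeSet := by
        have := (Finset.mem_sdiff.mp (hS he)).2
        simpa [SimpleGraph.mem_edgeFinset] using this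
      exact ⟨Or.inr ⟨he, SimpleGraph.not_isDiag_of_mem_edgeSet A heA⟩, hnT⟩
  · intro G hG
    rw [Finset.mem_filter] at hG
    have hdisj : Disjoint T.edgeFinset (G.edgeFinset \ T.edgeFinset) := Finset.disjoint_sdiff
    rw [← Finset.prod_union hdisj,
      Finset.union_sdiff_of_subset (SimpleGraph.edgeFinset_mono hG.2.1)]

lemma abs_sum_interval_le (T A : SimpleGraph (Fin n)) (hTA : T ≤ A) (f : Sym2 (Fin n) → ℝ)
    (hf1 : ∀ e, -1 ≤ f e) (hf0 : ∀ e, f e ≤ 0) :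
    |∑ G ∈ Finset.univ.filter (fun G : SimpleGraph (Fin n) => T ≤ G ∧ G ≤ A),
        ∏ e ∈ G.edgeFinset, f e|
      ≤ ∏ e ∈ T.edgeFinset, |f e| := by
  rw [sum_interval T A hTA f, abs_mul, Finset.abs_prod]
  have h1 : |∏ e ∈ A.edgeFinset \ T.edgeFinset, (1 + f e)| ≤ 1 := by
    rw [Finset.abs_prod]
    refine Finset.prod_le_one (fun e _ => abs_nonneg _) (fun e _ => ?_)
    rw [abs_le]
    constructor
    · have := hf1 e; linarith
    · have := hf0 e; linarith
  calc (∏ e ∈ T.edgeFinset, |f e|) * |∏ e ∈ A.edgeFinset \ T.edgeFinset, (1 + f e)|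
      ≤ (∏ e ∈ T.edgeFinset, |f e|) * 1 := by
        apply mul_le_mul_of_nonneg_left h1
        exact Finset.prod_nonneg fun e _ => abs_nonneg _
    _ = ∏ e ∈ T.edgeFinset, |f e| := mul_one _

/-- Convert the double product in the statement to a product over the edge set. -/
lemma double_prod_eq (G : SimpleGraph (Fin n)) (g : Fin n → Fin n → ℝ)
    (hg : ∀ i j, g i j = g j i) :
    (∏ i : Fin n, ∏ j : Fin n, (if i < j ∧ G.Adj i j then g i j else 1))
      = ∏ e ∈ G.edgeFinset, Sym2.lift ⟨g, hg⟩ e := by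
  rw [← Finset.prod_product', ← Finset.prod_filter]
  refine Finset.prod_nbij (fun p => s(p.1, p.2)) ?_ ?_ ?_ ?_
  · intro p hp
    simp only [Finset.mem_filter] at hp
    rw [SimpleGraph.mem_edgeFinset, SimpleGraph.mem_edgeSet]
    exact hp.2.2
  · intro p hp q hq hpq
    simp only [Finset.coe_filter, Set.mem_setOf_eq] at hp hq
    rw [Sym2.eq_iff] at hpq
    rcases hpq with ⟨h1, h2⟩ | ⟨h1, h2⟩
    · exact Prod.ext h1 h2
    · exfalso
      have := hp.2.1
      have := hq.2.1
      omega
  · intro e he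
    simp only [Finset.coe_filter, Set.mem_setOf_eq, Set.mem_image] at he ⊢
    induction e using Sym2.ind with
    | _ a b =>
      have hab : G.Adj a b := (SimpleGraph.mem_edgeSet G).mp
        ((SimpleGraph.mem_edgeFinset).mp he)
      rcases lt_or_gt_of_ne hab.ne with h | h
      · exact ⟨(a, b), ⟨Finset.mem_univ _, h, hab⟩, rfl⟩
      · exact ⟨(b, a), ⟨Finset.mem_univ _, h, hab.symm⟩, Sym2.eq_swap⟩
  · intro p hp
    rw [Sym2.lift_mk]

end UrsellTreeBoundAux

open UrsellTreeBoundAux Finset SimpleGraph in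
/-- Tree bound for Ursell functions: let `ξ : Ω × Ω → ℝ` be symmetric with
`−1 ≤ ξ ≤ 0`. Then the Ursell function
`φ(ω₁,…,ωₙ) = (1/n!) ∑_{G connected} ∏_{{i,j}∈G} ξ(ωᵢ,ωⱼ)` satisfies
`|φ(ω₁,…,ωₙ)| ≤ (1/n!) ∑_{T tree} ∏_{{i,j}∈T} |ξ(ωᵢ,ωⱼ)|`. -/
theorem ursell_tree_bound {Ω : Type*} (n : ℕ) (hn : 1 ≤ n) (ξ : Ω → Ω → ℝ)
    (hsymm : ∀ a b, ξ a b = ξ b a)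
    (hlb : ∀ a b, -1 ≤ ξ a b) (hub : ∀ a b, ξ a b ≤ 0)
    (ω : Fin n → Ω) :
    |(1 / (n.factorial : ℝ)) *
        ∑ G : SimpleGraph (Fin n),
          (if G.Connected then
            ∏ i : Fin n, ∏ j : Fin n,
              (if i < j ∧ G.Adj i j then ξ (ω i) (ω j) else 1)
          else 0)|
      ≤ (1 / (n.factorial : ℝ)) *
        ∑ G : SimpleGraph (Fin n),
          (if G.IsTree then
            ∏ i : Fin n, ∏ j : Fin n,
              (if i < j ∧ G.Adj i j then |ξ (ω i) (ω j)| else 1)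
          else 0) := by
  haveI : NeZero n := ⟨Nat.one_le_iff_ne_zero.mp hn⟩
  set g : Fin n → Fin n → ℝ := fun i j => ξ (ω i) (ω j) with hgdef
  have hg : ∀ i j, g i j = g j i := fun i j => hsymm _ _
  have hgabs : ∀ i j, |g i j| = |g j i| := fun i j => by rw [hg]
  set F : Sym2 (Fin n) → ℝ := Sym2.lift ⟨g, hg⟩ with hFdef
  have hF1 : ∀ e, -1 ≤ F e := by
    intro e; induction e using Sym2.ind with
    | _ a b => rw [hFdef, Sym2.lift_mk]; exact hlb _ _
  have hF0 : ∀ e, F e ≤ 0 := by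
    intro e; induction e using Sym2.ind with
    | _ a b => rw [hFdef, Sym2.lift_mk]; exact hub _ _
  -- rewrite both sums
  have hL : ∑ G : SimpleGraph (Fin n),
      (if G.Connected then
        ∏ i : Fin n, ∏ j : Fin n, (if i < j ∧ G.Adj i j then ξ (ω i) (ω j) else 1)
      else 0)
      = ∑ G ∈ Finset.univ.filter (fun G : SimpleGraph (Fin n) => G.Connected),
          ∏ e ∈ G.edgeFinset, F e := by
    rw [Finset.sum_filter]
    refine Finset.sum_congr rfl fun G _ => ?_
    split_ifs with h
    · exact double_prod_eq G g hg
    · rfl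
  have hR : ∑ G : SimpleGraph (Fin n),
      (if G.IsTree then
        ∏ i : Fin n, ∏ j : Fin n, (if i < j ∧ G.Adj i j then |ξ (ω i) (ω j)| else 1)
      else 0)
      = ∑ G ∈ Finset.univ.filter (fun G : SimpleGraph (Fin n) => G.IsTree),
          ∏ e ∈ G.edgeFinset, |F e| := by
    rw [Finset.sum_filter]
    refine Finset.sum_congr rfl fun G _ => ?_
    split_ifs with h
    · rw [double_prod_eq G (fun i j => |g i j|) hgabs]
      refine Finset.prod_congr rfl fun e _ => ?_
      induction e using Sym2.ind with
      | _ a b => rw [Sym2.lift_mk, hFdef, Sym2.lift_mk]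
    · rfl
  rw [hL, hR, abs_mul, abs_of_nonneg (by positivity : (0:ℝ) ≤ 1 / (n.factorial : ℝ))]
  apply mul_le_mul_of_nonneg_left _ (by positivity : (0:ℝ) ≤ 1 / (n.factorial : ℝ))
  -- the core inequality
  set C := Finset.univ.filter (fun G : SimpleGraph (Fin n) => G.Connected) with hC
  calc |∑ G ∈ C, ∏ e ∈ G.edgeFinset, F e|
      = |∑ T ∈ C.image ptree, ∑ G ∈ C.filter (fun G => ptree G = T),
          ∏ e ∈ G.edgeFinset, F e| := by
        congr 1
        exact (Finset.sum_fiberwise_of_maps_to (fun G hG => Finset.mem_image_of_mem _ hG) _).symm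
    _ ≤ ∑ T ∈ C.image ptree, |∑ G ∈ C.filter (fun G => ptree G = T),
          ∏ e ∈ G.edgeFinset, F e| := Finset.abs_sum_le_sum_abs _ _
    _ ≤ ∑ T ∈ C.image ptree, ∏ e ∈ T.edgeFinset, |F e| := by
        refine Finset.sum_le_sum fun T hT => ?_
        obtain ⟨G₀, hG₀C, hG₀⟩ := Finset.mem_image.mp hT
        have hG₀c : G₀.Connected := (Finset.mem_filter.mp hG₀C).2
        have hGood : Good T := hG₀ ▸ good_ptree hG₀c
        have hfib := (fiber_iff hGood G₀).mp ⟨hG₀c, hG₀⟩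
        have hTA : T ≤ amb T := le_trans hfib.1 hfib.2
        have hset : C.filter (fun G => ptree G = T)
            = Finset.univ.filter (fun G : SimpleGraph (Fin n) => T ≤ G ∧ G ≤ amb T) := by
          ext G
          simp only [hC, Finset.mem_filter, Finset.mem_univ, true_and]
          constructor
          · rintro ⟨h1, h2⟩
            exact (fiber_iff hGood G).mp ⟨h1, h2⟩
          · intro h
            exact (fiber_iff hGood G).mpr h
        rw [hset]
        exact abs_sum_interval_le T (amb T) hTA F hF1 hF0
    _ ≤ ∑ T ∈ Finset.univ.filter (fun G : SimpleGraph (Fin n) => G.IsTree),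
          ∏ e ∈ T.edgeFinset, |F e| := by
        refine Finset.sum_le_sum_of_subset_of_nonneg ?_ ?_
        · intro T hT
          obtain ⟨G₀, hG₀C, hG₀⟩ := Finset.mem_image.mp hT
          have hG₀c : G₀.Connected := (Finset.mem_filter.mp hG₀C).2
          have hGood : Good T := hG₀ ▸ good_ptree hG₀c
          exact Finset.mem_filter.mpr ⟨Finset.mem_univ _, good_isTree hGood⟩
        · intro T _ _
          exact Finset.prod_nonneg fun e _ => abs_nonneg _
end
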